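/- The number of standard Young tableaux of size n with at most two rows whose second-row entry set is uncrowded equals the number of binary words of length n−1 in which every maximal block of 1s has odd length. -/

import Mathlib

/-- The simple transposition `s_i` in `S_n`, swapping positions `i` and `i+1`
(1-indexed, so valid for `1 ≤ i ≤ n-1`); otherwise the identity. -/
def simpleT (n : ℕ) (i : ℕ) : Equiv.Perm (Fin n) :=
  if h : 1 ≤ i ∧ i < n then Equiv.swap ⟨i - 1, by omega⟩ ⟨i, h.2⟩ else 1

/-- `l` is a word in the simple transpositions `s_1, …, s_{n-1}` with product `w`. -/
def IsWord (n : ℕ) (w : Equiv.Perm (Fin n)) (l : List ℕ) : Prop :=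
  (∀ i ∈ l, 1 ≤ i ∧ i < n) ∧ (l.map (simpleT n)).prod = w

/-- The Coxeter length of `w`. -/
noncomputable def coxLength (n : ℕ) (w : Equiv.Perm (Fin n)) : ℕ :=
  sInf {k | ∃ l, IsWord n w l ∧ l.length = k}

/-- A reduced word for `w`: a word of minimal length. -/
def IsReducedWord (n : ℕ) (w : Equiv.Perm (Fin n)) (l : List ℕ) : Prop :=
  IsWord n w l ∧ l.length = coxLength n w

/-- A run: a nonempty word of consecutive integers, increasing or decreasing. -/
def IsRun (r : List ℕ) : Prop :=
  r ≠ [] ∧ (List.Chain' (fun a b => b = a + 1) r ∨ List.Chain' (fun a b => a = b + 1) r)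

/-- `run(w)`: the minimum number of runs whose concatenation is a reduced word of `w`. -/
noncomputable def runStat (n : ℕ) (w : Equiv.Perm (Fin n)) : ℕ :=
  sInf {k | ∃ rs : List (List ℕ), rs.length = k ∧ (∀ r ∈ rs, IsRun r) ∧
    IsReducedWord n w rs.flatten}

/-- One-line notation of `w`, with entries `1, …, n`. -/
def oneLine {n : ℕ} (w : Equiv.Perm (Fin n)) : List ℕ :=
  List.ofFn (fun i => (w i : ℕ) + 1)

/-- Length of a longest increasing subsequence of the one-line notation of `w`. -/
noncomputable def lisLen {n : ℕ} (w : Equiv.Perm (Fin n)) : ℕ :=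
  sSup {k | ∃ l : List ℕ, l.Sublist (oneLine w) ∧ l.Pairwise (· < ·) ∧ l.length = k}

/-- Schensted row insertion: insert `x` into row `r`, possibly bumping an entry. -/
def rowInsert (r : List ℕ) (x : ℕ) : List ℕ × Option ℕ :=
  match r.findIdx? (fun y => decide (x < y)) with
  | none => (r ++ [x], none)
  | some i => (r.set i x, r[i]?)

/-- Schensted insertion of `x` into a tableau (list of rows). -/
def bumpInsert : List (List ℕ) → ℕ → List (List ℕ)
  | [], x => [[x]]
  | r :: rest, x =>
    match rowInsert r x with
    | (r', none) => r' :: rest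
    | (r', some y) => r' :: bumpInsert rest y

/-- The RSK insertion tableau of a word. -/
def Ptab (w : List ℕ) : List (List ℕ) := w.foldl bumpInsert []

/-- The index of the row where the new box appeared, going from `p` to `p'`. -/
def recRow (p p' : List (List ℕ)) : ℕ :=
  (List.range p'.length).findIdx
    (fun j => decide ((p.getD j []).length < (p'.getD j []).length))

/-- Add entry `v` at the end of row `j` of `q`. -/
def addAt (q : List (List ℕ)) (j v : ℕ) : List (List ℕ) :=
  if j < q.length then q.set j ((q.getD j []) ++ [v]) else q ++ [[v]]

/-- The RSK recording tableau of a word. -/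
def Qtab (w : List ℕ) : List (List ℕ) :=
  ((w.zipIdx.map Prod.swap).foldl (fun pq ix =>
    let p' := bumpInsert pq.1 ix.2
    (p', addAt pq.2 (recRow pq.1 p') (ix.1 + 1))) (([], []) : List (List ℕ) × List (List ℕ))).2

/-- The second row of a tableau. -/
def Row2 (t : List (List ℕ)) : List ℕ := t.getD 1 []

/-- A set `L` of integers is uncrowded if every interval `[y, y+2x]` contains
at most `x+1` elements of `L`. -/
def Uncrowded (L : Set ℤ) : Prop :=
  ∀ (y : ℤ) (x : ℕ), 0 < x → ({z : ℤ | y ≤ z ∧ z ≤ y + 2 * (x : ℤ)} ∩ L).ncard ≤ x + 1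

/-- `w` is boolean: some reduced word of `w` has all distinct letters. -/
def BooleanPerm (n : ℕ) (w : Equiv.Perm (Fin n)) : Prop :=
  ∃ l, IsReducedWord n w l ∧ l.Nodup

/-- `w` avoids the pattern `321`. -/
def Avoids321 {n : ℕ} (w : Equiv.Perm (Fin n)) : Prop :=
  ¬ ∃ i j k : Fin n, i < j ∧ j < k ∧ w k < w j ∧ w j < w i

/-- `w` avoids the pattern `3412`. -/
def Avoids3412 {n : ℕ} (w : Equiv.Perm (Fin n)) : Prop :=
  ¬ ∃ i j k l : Fin n, i < j ∧ j < k ∧ k < l ∧ w k < w l ∧ w l < w i ∧ w i < w j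

/-- The support of `w`: the letters appearing in reduced words of `w`. -/
def Supp (n : ℕ) (w : Equiv.Perm (Fin n)) : Set ℕ :=
  {i | ∃ l, IsReducedWord n w l ∧ i ∈ l}

/-- The entries of a row, as a set of integers. -/
def entrySet (r : List ℕ) : Set ℤ := {z | ∃ x ∈ r, (x : ℤ) = z}

/-- `(r1, r2)` are the rows of a standard Young tableau of size `n` with at most
two rows (entries `1, …, n`). -/
def IsSYT2 (n : ℕ) (r1 r2 : List ℕ) : Prop :=
  r1.Pairwise (· < ·) ∧ r2.Pairwise (· < ·) ∧ r2.length ≤ r1.length ∧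
  (∀ i < r2.length, r1.getD i 0 < r2.getD i 0) ∧
  (r1 ++ r2).Perm (List.range' 1 n)

/-- The tableau (list of nonempty rows) with rows `r1`, `r2`. -/
def tab2 (r1 r2 : List ℕ) : List (List ℕ) :=
  if r2 = [] then (if r1 = [] then [] else [r1]) else [r1, r2]

/-- Every maximal block of `1`s (`true`s) in the binary word has odd length. -/
def OddBlocks (l : List Bool) : Prop :=
  ∀ l₁ l₂ l₃ : List Bool, l = l₁ ++ l₂ ++ l₃ → l₂ ≠ [] → (∀ b ∈ l₂, b = true) →
    l₁.getLast? ≠ some true → l₃.head? ≠ some true → Odd l₂.length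


namespace Stmt17Aux


/-- Finset of all Bool words of length m. -/
def words : ℕ → Finset (List Bool)
  | 0 => {[]}
  | m+1 => (words m).image (List.cons true) ∪ (words m).image (List.cons false)

lemma mem_words {m : ℕ} {l : List Bool} : l ∈ words m ↔ l.length = m := by
  induction m generalizing l with
  | zero => simp [words, List.length_eq_zero_iff]
  | succ m ih =>
    simp only [words, Finset.mem_union, Finset.mem_image]
    constructor
    · rintro (⟨t, ht, rfl⟩ | ⟨t, ht, rfl⟩) <;> simp [ih.mp ht]
    · intro h
      match l with
      | b :: t =>
        cases b
        · exact Or.inr ⟨t, ih.mpr (by simpa using h), rfl⟩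
        · exact Or.inl ⟨t, ih.mpr (by simpa using h), rfl⟩

/-- count of words of length m satisfying P -/
def cnt (P : List Bool → Bool) (m : ℕ) : ℕ := ((words m).filter (fun l => P l = true)).card

lemma cnt_succ (P : List Bool → Bool) (m : ℕ) :
    cnt P (m+1) = cnt (fun l => P (true :: l)) m + cnt (fun l => P (false :: l)) m := by
  unfold cnt
  rw [words, Finset.filter_union, Finset.card_union_of_disjoint]
  · congr 1
    · rw [Finset.filter_image, Finset.card_image_of_injective _ (fun a b h => by injection h)]
    · rw [Finset.filter_image, Finset.card_image_of_injective _ (fun a b h => by injection h)]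
  · refine Finset.disjoint_filter_filter ?_
    simp only [Finset.disjoint_left, Finset.mem_image]
    rintro x ⟨t, _, rfl⟩ ⟨s, _, h⟩
    injection h with h1 _
    cases h1

lemma cnt_zero (P : List Bool → Bool) : cnt P 0 = if P [] then 1 else 0 := by
  unfold cnt words
  by_cases h : P [] = true <;> simp [h, Finset.filter_singleton]

/-- recursive check for OddBlocks -/
def obF : List Bool → Bool
  | [] => true
  | false :: t => obF t
  | [true] => true
  | true :: false :: t => obF t
  | true :: true :: t => t.head?.getD false && obF t

lemma oddBlocks_nil : OddBlocks [] := by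
  intro l₁ l₂ l₃ h hne _ _ _
  exact absurd (by simpa using (List.append_eq_nil_iff.mp (List.append_eq_nil_iff.mp h.symm).1).2) hne

lemma oddBlocks_single : OddBlocks [true] := by
  intro l₁ l₂ l₃ h hne hall h1 h3
  match l₁, l₂, l₃, h with
  | [], l₂, l₃, h =>
    match l₂, hne, h with
    | true :: l₂', _, h =>
      have : l₂' ++ l₃ = [] := by simpa using h.symm
      have h2 : l₂' = [] := (List.append_eq_nil_iff.mp this).1
      simp [h2]
  | (true :: l₁'), l₂, l₃, h =>
    have : l₁' ++ (l₂ ++ l₃) = [] := by simpa using h.symm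
    have : l₁' = [] := (List.append_eq_nil_iff.mp this).1
    subst this
    simp at h1

lemma getLast?_cons_cons (a b : Bool) (l : List Bool) :
    (a :: b :: l).getLast? = (b :: l).getLast? := rfl

lemma oddBlocks_cons_false {t : List Bool} : OddBlocks (false :: t) ↔ OddBlocks t := by
  constructor
  · intro h l₁ l₂ l₃ he hne hall h1 h3
    refine h (false :: l₁) l₂ l₃ (by simp [he]) hne hall ?_ h3
    match l₁ with
    | [] => simp
    | a :: l₁' => rw [getLast?_cons_cons]; exact h1
  · intro h l₁ l₂ l₃ he hne hall h1 h3
    match l₁, he with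
    | [], he =>
      simp only [List.nil_append] at he
      match l₂, hne, he with
      | b :: l₂', _, he =>
        have : false = b := by injection he with h' _ <;> exact h'
        rw [← this] at hall
        exact absurd (hall false (by simp)) (by simp)
    | false :: l₁', he =>
      refine h l₁' l₂ l₃ (by simpa using he) hne hall ?_ h3
      match l₁' with
      | [] => simp
      | a :: l₁'' => rw [getLast?_cons_cons] at h1; exact h1
    | true :: l₁', he =>
      exfalso
      have h' : false = true := by injection he with h' _ <;> exact h'
      simp at h'

lemma oddBlocks_true_false {t : List Bool} : OddBlocks (true :: false :: t) ↔ OddBlocks t := by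
  constructor
  · intro h l₁ l₂ l₃ he hne hall h1 h3
    refine h (true :: false :: l₁) l₂ l₃ (by simp [he]) hne hall ?_ h3
    rw [getLast?_cons_cons]
    match l₁ with
    | [] => simp
    | a :: l₁' => rw [getLast?_cons_cons]; exact h1
  · intro h l₁ l₂ l₃ he hne hall h1 h3
    match l₁, he with
    | [], he =>
      simp only [List.nil_append] at he
      match l₂, hne, he with
      | b :: l₂', _, he =>
        have hb : true = b := by injection he with h' _ <;> exact h'
        subst hb
        have h2 : false :: t = l₂' ++ l₃ := by injection he with _ h' <;> exact h'
        match l₂', h2 with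
        | [], h2 => exact odd_one
        | c :: l₂'', h2 =>
          have : false = c := by injection h2 with h' _ <;> exact h'
          exact absurd (hall c (by simp)) (by simp [← this])
    | [true], he =>
      simp at h1
    | true :: false :: l₁', he =>
      refine h l₁' l₂ l₃ (by simpa using he) hne hall ?_ h3
      match l₁' with
      | [] => simp
      | a :: l₁'' => rw [getLast?_cons_cons] at h1; exact h1
    | true :: true :: l₁', he =>
      exfalso
      have h2 : false :: t = true :: (l₁' ++ l₂ ++ l₃) := by injection he with _ h' <;> exact h'
      have : false = true := by injection h2 with h' _ <;> exact h'
      simp at this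

lemma oddBlocks_true_true {t : List Bool} :
    OddBlocks (true :: true :: t) ↔ t.head? = some true ∧ OddBlocks t := by
  constructor
  · intro h
    have hh : t.head? = some true := by
      by_contra hc
      have := h [] [true, true] t (by simp) (by simp) (by simp) (by simp) hc
      simp [Nat.odd_iff] at this
    refine ⟨hh, ?_⟩
    intro l₁ l₂ l₃ he hne hall h1 h3
    match l₁, he with
    | [], he =>
      simp only [List.nil_append] at he
      have hall' : ∀ b ∈ true :: true :: l₂, b = true := by
        intro b hb
        rcases List.mem_cons.mp hb with rfl | hb
        · rfl
        rcases List.mem_cons.mp hb with rfl | hb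
        · rfl
        · exact hall _ hb
      have := h [] (true :: true :: l₂) l₃ (by simp [he]) (by simp) hall' (by simp) h3
      simp only [List.length_cons] at this ⊢
      rw [Nat.odd_iff] at this ⊢
      omega
    | a :: l₁', he =>
      refine h (true :: true :: a :: l₁') l₂ l₃ (by simp [he]) hne hall ?_ h3
      rw [getLast?_cons_cons, getLast?_cons_cons]
      exact h1
  · rintro ⟨hh, h⟩
    intro l₁ l₂ l₃ he hne hall h1 h3
    match l₁, he with
    | [], he =>
      simp only [List.nil_append] at he
      match l₂, hne, he with
      | b :: l₂', _, he =>
        have hb : true = b := by injection he with h' _ <;> exact h'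
        subst hb
        have h2 : true :: t = l₂' ++ l₃ := by injection he with _ h' <;> exact h'
        match l₂', h2 with
        | [], h2 =>
          exfalso
          apply h3
          rw [show l₃ = true :: t from by simpa using h2.symm]
          rfl
        | c :: l₂'', h2 =>
          have hc : true = c := by injection h2 with h' _ <;> exact h'
          subst hc
          have h2' : t = l₂'' ++ l₃ := by injection h2 with _ h' <;> exact h'
          by_cases hnil : l₂'' = []
          · exfalso
            apply h3
            subst hnil
            rw [show l₃ = t from by simpa using h2'.symm]
            exact hh
          · have : Odd l₂''.length :=
              h [] l₂'' l₃ (by simpa using h2') hnil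
                (fun b hb => hall b (by simp [hb])) (by simp) h3
            simp only [List.length_cons] at this ⊢
            rw [Nat.odd_iff] at this ⊢
            omega
    | [true], he => simp at h1
    | true :: true :: l₁', he =>
      have h2 : true :: t = true :: (l₁' ++ l₂ ++ l₃) := by injection he with _ h' <;> exact h'
      have h3' : t = l₁' ++ l₂ ++ l₃ := by injection h2 with _ h' <;> exact h'
      match l₁', h3' with
      | [], _ => simp at h1
      | a :: l₁'', h3'' =>
        refine h (a :: l₁'') l₂ l₃ h3'' hne hall ?_ h3
        rw [getLast?_cons_cons, getLast?_cons_cons] at h1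
        exact h1
    | true :: false :: l₁', he =>
      exfalso
      have h2 : true :: t = false :: (l₁' ++ l₂ ++ l₃) := by injection he with _ h' <;> exact h'
      have : true = false := by injection h2 with h' _ <;> exact h'
      simp at this
    | false :: l₁', he =>
      exfalso
      have : true = false := by injection he with h' _ <;> exact h'
      simp at this

theorem oddBlocks_iff_obF (l : List Bool) : OddBlocks l ↔ obF l = true := by
  induction l using obF.induct with
  | case1 => simpa [obF] using oddBlocks_nil
  | case2 t ih => rw [oddBlocks_cons_false]; simpa [obF] using ih
  | case3 => simpa [obF] using oddBlocks_single
  | case4 t ih => rw [oddBlocks_true_false]; simpa [obF] using ih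
  | case5 t ih =>
    rw [oddBlocks_true_true]
    show _ ↔ (t.head?.getD false && obF t) = true
    rw [Bool.and_eq_true]
    constructor
    · rintro ⟨h1, h2⟩; exact ⟨by simp [h1], ih.mp h2⟩
    · rintro ⟨h1, h2⟩
      refine ⟨?_, ih.mpr h2⟩
      match t, h1 with
      | true :: t', _ => rfl

def runA : ℤ → List Bool → Bool
  | _, [] => true
  | d, true :: t => if d ≤ 0 then runA (max (d+1) 0) t else false
  | d, false :: t => runA (d-1) t

lemma obF_false (t : List Bool) : obF (false :: t) = obF t := by simp [obF]
lemma obF_tf (t : List Bool) : obF (true :: false :: t) = obF t := by simp [obF]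
lemma obF_tt (t : List Bool) : obF (true :: true :: t) = (t.head?.getD false && obF t) := by
  simp [obF]
lemma run_true (d : ℤ) (l : List Bool) :
    runA d (true :: l) = if d ≤ 0 then runA (max (d+1) 0) l else false := rfl
lemma run_false (d : ℤ) (l : List Bool) : runA d (false :: l) = runA (d-1) l := rfl

lemma cnt_congr {P Q : List Bool → Bool} (h : ∀ l, P l = Q l) (m : ℕ) : cnt P m = cnt Q m := by
  unfold cnt; congr 1; exact Finset.filter_congr (fun l _ => by rw [h])

lemma cnt_runA_neg (d : ℤ) (hd : d ≤ -1) (m : ℕ) : cnt (runA d) m = cnt (runA (-1)) m := by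
  induction m generalizing d with
  | zero => rw [cnt_zero, cnt_zero]; rfl
  | succ m ih =>
    rw [cnt_succ, cnt_succ]
    have h1 : cnt (fun l => runA d (true :: l)) m = cnt (fun l => runA (-1) (true :: l)) m := by
      have e1 : ∀ l, runA d (true :: l) = runA 0 l := by
        intro l; rw [run_true, if_pos (by omega), show max (d+1) 0 = 0 by omega]
      have e2 : ∀ l, runA (-1 : ℤ) (true :: l) = runA 0 l := by
        intro l; rw [run_true]; norm_num
      rw [cnt_congr e1, cnt_congr e2]
    have h2 : cnt (fun l => runA d (false :: l)) m = cnt (fun l => runA (-1) (false :: l)) m := by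
      have e1 : ∀ l, runA d (false :: l) = runA (d-1) l := fun l => rfl
      have e2 : ∀ l, runA (-1 : ℤ) (false :: l) = runA (-1-1) l := fun l => rfl
      rw [cnt_congr e1, cnt_congr e2, ih _ (by omega), ih (-1-1) (by omega)]
    rw [h1, h2]

lemma cnt_runA_one (m : ℕ) : cnt (runA 1) (m+1) = cnt (runA 0) m := by
  rw [cnt_succ]
  have h1 : cnt (fun l => runA 1 (true :: l)) m = 0 := by
    have e : ∀ l, runA (1:ℤ) (true :: l) = false := by intro l; rw [run_true]; norm_num
    rw [cnt_congr e]; unfold cnt; simp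
  have h2 : cnt (fun l => runA 1 (false :: l)) m = cnt (runA 0) m := by
    refine cnt_congr (fun l => ?_) m
    rw [run_false]; norm_num
  rw [h1, h2]; omega

lemma cnt_runA_zero (m : ℕ) : cnt (runA 0) (m+1) = cnt (runA 1) m + cnt (runA (-1)) m := by
  rw [cnt_succ]
  have h1 : cnt (fun l => runA 0 (true :: l)) m = cnt (runA 1) m := by
    refine cnt_congr (fun l => ?_) m
    rw [run_true]; norm_num
  have h2 : cnt (fun l => runA 0 (false :: l)) m = cnt (runA (-1)) m := by
    refine cnt_congr (fun l => ?_) m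
    rw [run_false]; norm_num
  rw [h1, h2]

lemma cnt_runA_negone (m : ℕ) :
    cnt (runA (-1)) (m+1) = cnt (runA 0) m + cnt (runA (-1)) m := by
  rw [cnt_succ]
  have h1 : cnt (fun l => runA (-1) (true :: l)) m = cnt (runA 0) m := by
    refine cnt_congr (fun l => ?_) m
    rw [run_true]; norm_num
  have h2 : cnt (fun l => runA (-1) (false :: l)) m = cnt (runA (-1)) m := by
    have e : ∀ l, runA (-1:ℤ) (false :: l) = runA (-1-1) l := fun l => rfl
    rw [cnt_congr e, cnt_runA_neg (-1-1) (by omega)]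
  rw [h1, h2]

def gS (m : ℕ) : ℕ := cnt obF m
def gO (m : ℕ) : ℕ := cnt (fun l => obF (true :: l)) m
def gE (m : ℕ) : ℕ := cnt (fun l => obF (true :: true :: l)) m

lemma gS_succ (m : ℕ) : gS (m+1) = gO m + gS m := by
  unfold gS gO
  rw [cnt_succ, cnt_congr (fun l => obF_false l) m]

lemma gO_succ (m : ℕ) : gO (m+1) = gE m + gS m := by
  unfold gO gE gS
  rw [cnt_succ, cnt_congr (fun l => obF_tf l) m]

lemma gE_succ (m : ℕ) : gE (m+1) = gO m := by
  unfold gE gO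
  rw [cnt_succ]
  have h0 : cnt (fun l => obF (true :: true :: false :: l)) m = 0 := by
    have e : ∀ l, obF (true :: true :: false :: l) = false := fun l => by
      rw [obF_tt]; simp
    rw [cnt_congr e]; unfold cnt; simp
  have h1 : cnt (fun l => obF (true :: true :: true :: l)) m
      = cnt (fun l => obF (true :: l)) m := by
    refine cnt_congr (fun l => ?_) m
    rw [obF_tt]; simp
  rw [h0, h1]; omega

lemma base_vals : gS 0 = 1 ∧ gO 0 = 1 ∧ gE 0 = 0 ∧ cnt (runA 0) 0 = 1
    ∧ cnt (runA 1) 0 = 1 ∧ cnt (runA (-1)) 0 = 1 := by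
  refine ⟨?_, ?_, ?_, ?_, ?_, ?_⟩ <;> simp [gS, gO, gE, cnt_zero, obF, runA]

theorem count_eq : ∀ m, cnt (runA 0) m = gS m := by
  have key : ∀ m, (cnt (runA 0) m = gS m ∧ cnt (runA (-1)) m = gO m + gE m)
      ∧ (cnt (runA 0) (m+1) = gS (m+1) ∧ cnt (runA (-1)) (m+1) = gO (m+1) + gE (m+1)) := by
    intro m
    induction m with
    | zero =>
      obtain ⟨h1, h2, h3, h4, h5, h6⟩ := base_vals
      refine ⟨⟨by rw [h1, h4], by rw [h6, h2, h3]⟩, ?_, ?_⟩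
      · rw [cnt_runA_zero, gS_succ, h5, h6, h1, h2]
      · rw [cnt_runA_negone, gO_succ, gE_succ, h4, h6, h1, h2, h3]
    | succ m ih =>
      obtain ⟨⟨ha, hb⟩, ⟨hc, hd⟩⟩ := ih
      refine ⟨⟨hc, hd⟩, ?_, ?_⟩
      · rw [cnt_runA_zero, cnt_runA_one, ha, hd, gE_succ m, gS_succ (m+1), gS_succ m]
        omega
      · rw [cnt_runA_negone, hc, hd, gO_succ (m+1), gE_succ (m+1)]
        omega
  exact fun m => (key m).1.1



/-- order statistic lemma -/
lemma osl {l : List ℕ} (hs : l.Pairwise (· < ·)) :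
    ∀ i < l.length, ∀ v : ℕ, (l.getD i 0 ≤ v ↔ i < (l.filter (· ≤ v)).length) := by
  induction l with
  | nil => intro i hi; simp at hi
  | cons x t ih =>
    rw [List.pairwise_cons] at hs
    intro i hi v
    match i with
    | 0 =>
      simp only [List.getD_cons_zero]
      constructor
      · intro h
        have : x ∈ (x :: t).filter (· ≤ v) := by
          rw [List.mem_filter]; exact ⟨by simp, by simpa using h⟩
        have := List.length_pos_iff.mpr (List.ne_nil_of_mem this)
        omega
      · intro h
        obtain ⟨y, hy, hyv⟩ : ∃ y ∈ x :: t, y ≤ v := by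
          have : (x :: t).filter (· ≤ v) ≠ [] := by
            intro hcon; rw [hcon] at h; simp at h
          obtain ⟨y, hy⟩ := List.exists_mem_of_ne_nil _ this
          rw [List.mem_filter] at hy
          exact ⟨y, hy.1, by simpa using hy.2⟩
        rcases List.mem_cons.mp hy with rfl | hy
        · exact hyv
        · exact le_trans (hs.1 y hy).le hyv
    | i+1 =>
      simp only [List.getD_cons_succ]
      by_cases hx : x ≤ v
      · have : (x :: t).filter (· ≤ v) = x :: t.filter (· ≤ v) := by
          rw [List.filter_cons, if_pos (by simpa using hx)]
        rw [this]
        simp only [List.length_cons]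
        rw [ih hs.2 i (by simpa using hi) v]
        omega
      · have hemp : t.filter (· ≤ v) = [] := by
          rw [List.filter_eq_nil_iff]
          intro a ha
          simp only [decide_eq_true_eq]
          intro hav
          exact hx (le_trans (hs.1 a ha).le hav)
        have : (x :: t).filter (· ≤ v) = [] := by
          rw [List.filter_cons, if_neg (by simpa using hx), hemp]
        rw [this]
        simp only [List.length_nil]
        constructor
        · intro h
          exfalso
          have hmem : t.getD i 0 ∈ t := by
            rw [List.getD_eq_getElem _ _ (by simpa using hi)]
            exact List.getElem_mem _
          exact hx (le_trans (hs.1 _ hmem).le h)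
        · omega

/-- count of elements ≤ the i-th element is i+1 -/
lemma cnt_at {l : List ℕ} (hs : l.Pairwise (· < ·)) {i : ℕ} (hi : i < l.length) :
    (l.filter (· ≤ l.getD i 0)).length = i + 1 := by
  have h1 : i < (l.filter (· ≤ l.getD i 0)).length := (osl hs i hi _).mp le_rfl
  have h2 : (l.filter (· ≤ l.getD i 0)).length ≤ i + 1 := by
    by_cases h : i + 1 < l.length
    · by_contra hc
      have := (osl hs (i+1) h (l.getD i 0)).mpr (by omega)
      have hlt : l.getD i 0 < l.getD (i+1) 0 := by
        rw [List.getD_eq_getElem _ _ hi, List.getD_eq_getElem _ _ h]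
        exact List.pairwise_iff_getElem.mp hs i (i+1) hi h (by omega)
      omega
    · calc (l.filter (· ≤ l.getD i 0)).length ≤ l.length := List.length_filter_le _ _
        _ ≤ i + 1 := by omega
  omega

/-- count of elements < the i-th element is i -/
lemma cnt_below {l : List ℕ} (hs : l.Pairwise (· < ·)) {i : ℕ} (hi : i < l.length)
    (h0 : 0 < l.getD i 0) :
    (l.filter (· ≤ l.getD i 0 - 1)).length = i := by
  have h2 : ¬ i < (l.filter (· ≤ l.getD i 0 - 1)).length := by
    rw [← osl hs i hi]
    omega
  rcases Nat.eq_zero_or_pos i with rfl | hip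
  · omega
  obtain ⟨j, rfl⟩ : ∃ j, i = j + 1 := ⟨i - 1, by omega⟩
  have h1 : j < (l.filter (· ≤ l.getD (j+1) 0 - 1)).length := by
    rw [← osl hs j (by omega)]
    have hlt : l.getD j 0 < l.getD (j+1) 0 := by
      rw [List.getD_eq_getElem _ _ (by omega : j < l.length), List.getD_eq_getElem _ _ hi]
      exact List.pairwise_iff_getElem.mp hs j (j+1) (by omega) hi (by omega)
    omega
  omega

/-- sorted lists with the same members are equal -/
lemma sorted_eq_of_mem_iff : ∀ {l₁ l₂ : List ℕ}, l₁.Pairwise (· < ·) → l₂.Pairwise (· < ·) →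
    (∀ x, x ∈ l₁ ↔ x ∈ l₂) → l₁ = l₂ := by
  intro l₁
  induction l₁ with
  | nil =>
    intro l₂ _ _ h
    rcases l₂ with _ | ⟨b, t₂⟩
    · rfl
    · exact absurd ((h b).mpr (by simp)) (by simp)
  | cons a t₁ ih =>
    intro l₂ h1 h2 h
    rcases l₂ with _ | ⟨b, t₂⟩
    · exact absurd ((h a).mp (by simp)) (by simp)
    rw [List.pairwise_cons] at h1 h2
    have hab : a = b := by
      rcases List.mem_cons.mp ((h a).mp (by simp)) with h' | h'
      · exact h'
      rcases List.mem_cons.mp ((h b).mpr (by simp)) with h'' | h''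
      · exact h''.symm
      · exact absurd (lt_trans (h1.1 b h'') (h2.1 a h')) (lt_irrefl a)
    subst hab
    have : t₁ = t₂ := by
      refine ih h1.2 h2.2 (fun x => ⟨fun hx => ?_, fun hx => ?_⟩)
      · rcases List.mem_cons.mp ((h x).mp (by simp [hx])) with rfl | h'
        · exact absurd (h1.1 x hx) (lt_irrefl x)
        · exact h'
      · rcases List.mem_cons.mp ((h x).mpr (by simp [hx])) with rfl | h'
        · exact absurd (h2.1 x hx) (lt_irrefl x)
        · exact h'
    rw [this]

def term (S : Finset ℕ) (p a : ℕ) : ℤ :=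
  2 * ((S.filter (fun x => a < x ∧ x ≤ p)).card : ℤ) - ((p : ℤ) - (a : ℤ))

def Dd (S : Finset ℕ) (p : ℕ) : ℤ :=
  (insert 1 (S.filter (fun a => a ≤ p))).sup' (Finset.insert_nonempty _ _) (term S p)

def Mcond (S : Finset ℕ) : Prop :=
  ∀ a ∈ S, ∀ b ∈ S, a ≤ b → 2 * (S.filter (fun x => a < x ∧ x ≤ b)).card ≤ b - a + 1

lemma sup'_add_const {s : Finset ℕ} (h : s.Nonempty) (f : ℕ → ℤ) (c : ℤ) :
    s.sup' h (fun a => f a + c) = s.sup' h f + c := by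
  apply le_antisymm
  · exact Finset.sup'_le _ _ (fun a ha => add_le_add_left (Finset.le_sup' f ha) c)
  · have hle : ∀ a ∈ s, f a ≤ s.sup' h (fun a => f a + c) - c := fun a ha => by
      have := Finset.le_sup' (fun a => f a + c) ha
      linarith
    have := Finset.sup'_le h f hle
    linarith

lemma D0 (S : Finset ℕ) (hb : ∀ x ∈ S, 1 ≤ x) : Dd S 1 = 0 := by
  have hidx : insert 1 (S.filter (fun a => a ≤ 1)) = {1} := by
    ext x
    simp only [Finset.mem_insert, Finset.mem_filter, Finset.mem_singleton]
    constructor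
    · rintro (rfl | ⟨hx, hx1⟩)
      · rfl
      · have := hb x hx; omega
    · rintro rfl; exact Or.inl rfl
  unfold Dd
  rw [Finset.sup'_congr (Finset.insert_nonempty _ _) hidx (fun a _ => rfl)]
  rw [Finset.sup'_singleton]
  unfold term
  have : S.filter (fun x => 1 < x ∧ x ≤ 1) = ∅ := by
    rw [Finset.filter_eq_empty_iff]; intro x _; omega
  rw [this]
  simp

lemma D1 (S : Finset ℕ) (p : ℕ) (hp : 1 ≤ p) (hnot : p + 1 ∉ S) :
    Dd S (p+1) = Dd S p - 1 := by
  have hidx : insert 1 (S.filter (fun a => a ≤ p + 1)) = insert 1 (S.filter (fun a => a ≤ p)) := by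
    ext x
    simp only [Finset.mem_insert, Finset.mem_filter]
    constructor
    · rintro (rfl | ⟨hx, hx1⟩)
      · exact Or.inl rfl
      · refine Or.inr ⟨hx, ?_⟩
        have : x ≠ p + 1 := fun hc => hnot (hc ▸ hx)
        omega
    · rintro (rfl | ⟨hx, hx1⟩)
      · exact Or.inl rfl
      · exact Or.inr ⟨hx, by omega⟩
  have hterm : ∀ a ∈ insert 1 (S.filter (fun a => a ≤ p)), term S (p+1) a = term S p a - 1 := by
    intro a _
    have hcard : S.filter (fun x => a < x ∧ x ≤ p + 1) = S.filter (fun x => a < x ∧ x ≤ p) := by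
      ext x
      simp only [Finset.mem_filter]
      constructor
      · rintro ⟨hx, hx1, hx2⟩
        refine ⟨hx, hx1, ?_⟩
        by_contra hcon
        have : x = p + 1 := by omega
        exact hnot (this ▸ hx)
      · rintro ⟨hx, hx1, hx2⟩; exact ⟨hx, hx1, by omega⟩
    unfold term
    rw [hcard]
    push_cast
    ring
  unfold Dd
  rw [Finset.sup'_congr (Finset.insert_nonempty _ _) hidx (fun a ha => hterm a (hidx ▸ ha))]
  have := sup'_add_const (Finset.insert_nonempty 1 (S.filter (fun a => a ≤ p))) (term S p) (-1)
  simpa [sub_eq_add_neg] using this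

lemma D2 (S : Finset ℕ) (p : ℕ) (hp : 1 ≤ p) (hmem : p + 1 ∈ S) :
    Dd S (p+1) = max (Dd S p + 1) 0 := by
  have hidx : insert 1 (S.filter (fun a => a ≤ p + 1))
      = insert (p+1) (insert 1 (S.filter (fun a => a ≤ p))) := by
    ext x
    simp only [Finset.mem_insert, Finset.mem_filter]
    constructor
    · rintro (rfl | ⟨hx, hx1⟩)
      · exact Or.inr (Or.inl rfl)
      · rcases Nat.lt_or_ge x (p+1) with h | h
        · exact Or.inr (Or.inr ⟨hx, by omega⟩)
        · exact Or.inl (by omega)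
    · rintro (rfl | rfl | ⟨hx, hx1⟩)
      · exact Or.inr ⟨hmem, le_rfl⟩
      · exact Or.inl rfl
      · exact Or.inr ⟨hx, by omega⟩
  have hterm : ∀ a ∈ insert 1 (S.filter (fun a => a ≤ p)), term S (p+1) a = term S p a + 1 := by
    intro a ha
    have hale : a ≤ p := by
      rcases Finset.mem_insert.mp ha with rfl | h
      · exact hp
      · exact (Finset.mem_filter.mp h).2
    have hcard : S.filter (fun x => a < x ∧ x ≤ p + 1)
        = insert (p+1) (S.filter (fun x => a < x ∧ x ≤ p)) := by
      ext x
      simp only [Finset.mem_filter, Finset.mem_insert]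
      constructor
      · rintro ⟨hx, hx1, hx2⟩
        rcases Nat.lt_or_ge x (p+1) with h | h
        · exact Or.inr ⟨hx, hx1, by omega⟩
        · exact Or.inl (by omega)
      · rintro (rfl | ⟨hx, hx1, hx2⟩)
        · exact ⟨hmem, by omega, le_rfl⟩
        · exact ⟨hx, hx1, by omega⟩
    have hni : p + 1 ∉ S.filter (fun x => a < x ∧ x ≤ p) := by
      simp only [Finset.mem_filter]
      rintro ⟨_, _, h⟩
      omega
    unfold term
    rw [hcard, Finset.card_insert_of_notMem hni]
    push_cast
    ring
  have hterm0 : term S (p+1) (p+1) = 0 := by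
    unfold term
    have : S.filter (fun x => p + 1 < x ∧ x ≤ p + 1) = ∅ := by
      rw [Finset.filter_eq_empty_iff]; intro x _; omega
    rw [this]
    simp
  unfold Dd
  rw [Finset.sup'_congr (Finset.insert_nonempty _ _) hidx (fun a _ => rfl),
    Finset.sup'_insert, hterm0]
  have e2 := Finset.sup'_congr (Finset.insert_nonempty 1 (S.filter (fun a => a ≤ p)))
    (rfl : insert 1 (S.filter (fun a => a ≤ p)) = insert 1 (S.filter (fun a => a ≤ p))) hterm
  rw [e2, sup'_add_const (Finset.insert_nonempty _ _) (term S p) 1]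
  exact sup_comm _ _
  exact Finset.insert_nonempty _ _

lemma D_le_one_iff (S : Finset ℕ) (h1 : 1 ∈ S) (hb : ∀ x ∈ S, 1 ≤ x) (b : ℕ) (hbS : b ∈ S) :
    Dd S b ≤ 1 ↔ ∀ a ∈ S, a ≤ b → 2 * (S.filter (fun x => a < x ∧ x ≤ b)).card ≤ b - a + 1 := by
  have hb1 : 1 ≤ b := hb b hbS
  unfold Dd
  rw [Finset.sup'_le_iff]
  constructor
  · intro h a haS hab
    have := h a (by
      simp only [Finset.mem_insert, Finset.mem_filter]
      exact Or.inr ⟨haS, hab⟩)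
    unfold term at this
    have hc : ((S.filter (fun x => a < x ∧ x ≤ b)).card : ℤ) * 2 - ((b:ℤ) - a) ≤ 1 := by linarith
    omega
  · intro h a ha
    have hmm : a ∈ S ∧ a ≤ b := by
      rcases Finset.mem_insert.mp ha with rfl | h'
      · exact ⟨h1, hb1⟩
      · have h'' := Finset.mem_filter.mp h'
        exact ⟨h''.1, h''.2⟩
    have hne := h a hmm.1 hmm.2
    unfold term
    omega

lemma inv (S : Finset ℕ) (n : ℕ) (hS1 : 1 ∈ S) (hSb : ∀ x ∈ S, 1 ≤ x ∧ x ≤ n) :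
    ∀ (t : List Bool) (p : ℕ), 1 ≤ p → p + t.length = n →
    (∀ j < t.length, (t.getD j false = true ↔ p+1+j ∈ S)) →
    (runA (Dd S p) t = true ↔ ∀ b ∈ S, p < b → Dd S b ≤ 1) := by
  intro t
  induction t with
  | nil =>
    intro p hp hlen _
    simp only [List.length_nil, Nat.add_zero] at hlen
    subst hlen
    constructor
    · intro _ b hbS hpb
      exact absurd hpb (by have := (hSb b hbS).2; omega)
    · intro _; rfl
  | cons c t' ih =>
    intro p hp hlen hchar
    have hlen' : (p+1) + t'.length = n := by simp at hlen; omega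
    have hchar' : ∀ j < t'.length, (t'.getD j false = true ↔ (p+1)+1+j ∈ S) := by
      intro j hj
      have h' := hchar (j+1) (by simp; omega)
      simp only [List.getD_cons_succ] at h'
      rw [show p+1+1+j = p+1+(j+1) by omega]
      exact h'
    have hbit : (c = true ↔ p + 1 ∈ S) := by
      have := hchar 0 (by simp)
      simpa using this
    cases c with
    | false =>
      have hnot : p + 1 ∉ S := fun h => by simpa using hbit.mpr h
      rw [run_false, show Dd S p - 1 = Dd S (p+1) from (D1 S p hp hnot).symm]
      rw [ih (p+1) (by omega) hlen' hchar']
      constructor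
      · intro h b hbS hpb
        refine h b hbS ?_
        have : b ≠ p + 1 := fun hc => hnot (hc ▸ hbS)
        omega
      · intro h b hbS hpb
        exact h b hbS (by omega)
    | true =>
      have hmem : p + 1 ∈ S := hbit.mp rfl
      rw [run_true]
      by_cases hD : Dd S p ≤ 0
      · rw [if_pos hD, show max (Dd S p + 1) 0 = Dd S (p+1) from (D2 S p hp hmem).symm]
        rw [ih (p+1) (by omega) hlen' hchar']
        constructor
        · intro h b hbS hpb
          rcases Nat.lt_or_ge (p+1) b with h' | h'
          · exact h b hbS h'
          · have : b = p + 1 := by omega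
            subst this
            rw [D2 S p hp hmem]
            omega
        · intro h b hbS hpb
          exact h b hbS (by omega)
      · rw [if_neg hD]
        constructor
        · intro h; exact absurd h (by simp)
        · intro h
          exfalso
          have := h (p+1) hmem (by omega)
          rw [D2 S p hp hmem] at this
          omega

lemma runA_iff_Mcond (S : Finset ℕ) (n : ℕ) (h1 : 1 ∈ S) (hb : ∀ x ∈ S, 1 ≤ x ∧ x ≤ n)
    (u : List Bool) (hlen : 1 + u.length = n)
    (hchar : ∀ j < u.length, (u.getD j false = true ↔ j + 2 ∈ S)) :
    runA 0 u = true ↔ Mcond S := by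
  have hchar1 : ∀ j < u.length, (u.getD j false = true ↔ 1+1+j ∈ S) := by
    intro j hj
    rw [show 1+1+j = j+2 by omega]
    exact hchar j hj
  have := inv S n h1 hb u 1 le_rfl hlen hchar1
  rw [D0 S (fun x hx => (hb x hx).1)] at this
  rw [this]
  constructor
  · intro h a haS b hbS hab
    have hD : Dd S b ≤ 1 := by
      rcases Nat.lt_or_ge 1 b with h' | h'
      · exact h b hbS h'
      · have hb1 : b = 1 := by have := (hb b hbS).1; omega
        subst hb1
        rw [D0 S (fun x hx => (hb x hx).1)]
        omega
    exact (D_le_one_iff S h1 (fun x hx => (hb x hx).1) b hbS).mp hD a haS hab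
  · intro h b hbS _
    rw [D_le_one_iff S h1 (fun x hx => (hb x hx).1) b hbS]
    intro a haS hab
    exact h a haS b hbS hab



lemma entrySet_eq (r : List ℕ) :
    entrySet r = ((r.toFinset.image (Nat.cast : ℕ → ℤ) : Finset ℤ) : Set ℤ) := by
  ext z
  simp [entrySet]

lemma filter_image_cast (F : Finset ℕ) (P : ℤ → Prop) [DecidablePred P] :
    (F.image (Nat.cast : ℕ → ℤ)).filter P = (F.filter (fun (t : ℕ) => P ((t : ℕ) : ℤ))).image Nat.cast := by
  rw [Finset.filter_image]

lemma card_filter_image_cast (F : Finset ℕ) (P : ℤ → Prop) [DecidablePred P] :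
    ((F.image (Nat.cast : ℕ → ℤ)).filter P).card = (F.filter (fun (t : ℕ) => P ((t : ℕ) : ℤ))).card := by
  rw [filter_image_cast, Finset.card_image_of_injective _ Nat.cast_injective]

lemma window_ncard (r : List ℕ) (y w : ℤ) :
    ({z : ℤ | y ≤ z ∧ z ≤ w} ∩ entrySet r).ncard
      = ((r.toFinset.image (Nat.cast : ℕ → ℤ)).filter (fun z => y ≤ z ∧ z ≤ w)).card := by
  rw [entrySet_eq]
  rw [show {z : ℤ | y ≤ z ∧ z ≤ w} ∩ ((r.toFinset.image (Nat.cast : ℕ → ℤ) : Finset ℤ) : Set ℤ)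
      = (((r.toFinset.image (Nat.cast : ℕ → ℤ)).filter (fun z => y ≤ z ∧ z ≤ w) : Finset ℤ) : Set ℤ) from ?_]
  · exact Set.ncard_coe_finset _
  · ext z
    simp only [Set.mem_inter_iff, Set.mem_setOf_eq, Finset.coe_filter, Finset.mem_coe]
    tauto

theorem uncrowded_iff (r2 : List ℕ) :
    Uncrowded (entrySet r2) ↔ ∀ a ∈ r2, ∀ b ∈ r2, a ≤ b →
      2 * (r2.toFinset.filter (fun x => a < x ∧ x ≤ b)).card ≤ b - a + 1 := by
  constructor
  · intro hU a ha b hb hab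
    by_contra hcon
    push_neg at hcon
    have hc : (r2.toFinset.filter (fun x => a < x ∧ x ≤ b)).card
        = (r2.toFinset.filter (fun x => a < x ∧ x ≤ b)).card := rfl
    generalize hcdef : (r2.toFinset.filter (fun x => a < x ∧ x ≤ b)).card = c at hcon
    have hc2 : 2 ≤ c := by
      rcases Nat.lt_or_ge c 2 with h | h
      · exfalso
        have hba : b = a := by omega
        have hemp : r2.toFinset.filter (fun x => a < x ∧ x ≤ b) = ∅ := by
          rw [Finset.filter_eq_empty_iff]; intro x _; omega
        rw [hemp] at hcdef
        simp at hcdef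
        omega
      · exact h
    have hx : 0 < c - 1 := by omega
    have := hU (a : ℤ) (c-1) hx
    rw [window_ncard] at this
    have hsub : insert (a : ℤ) (((r2.toFinset.image (Nat.cast : ℕ → ℤ))).filter
          (fun z => (a:ℤ) < z ∧ z ≤ (b:ℤ)))
        ⊆ (r2.toFinset.image (Nat.cast : ℕ → ℤ)).filter
          (fun z => (a:ℤ) ≤ z ∧ z ≤ (a:ℤ) + 2 * ((c-1 : ℕ) : ℤ)) := by
      intro z hz
      rcases Finset.mem_insert.mp hz with rfl | hz
      · refine Finset.mem_filter.mpr ⟨Finset.mem_image.mpr ⟨a, by simp [ha], rfl⟩, le_rfl, ?_⟩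
        have : (0:ℤ) ≤ 2 * ((c-1:ℕ):ℤ) := by positivity
        omega
      · have hz' := Finset.mem_filter.mp hz
        refine Finset.mem_filter.mpr ⟨hz'.1, by linarith [hz'.2.1], ?_⟩
        have hzb : z ≤ (b:ℤ) := hz'.2.2
        have : (b:ℤ) ≤ (a:ℤ) + 2*((c-1:ℕ):ℤ) := by
          have : b ≤ a + 2*c - 2 := by omega
          push_cast
          omega
        omega
    have hcard : (insert (a : ℤ) (((r2.toFinset.image (Nat.cast : ℕ → ℤ))).filter
          (fun z => (a:ℤ) < z ∧ z ≤ (b:ℤ)))).card = c + 1 := by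
      rw [Finset.card_insert_of_notMem (by simp), card_filter_image_cast]
      have : (r2.toFinset.filter (fun (t : ℕ) => (a:ℤ) < (t:ℤ) ∧ (t:ℤ) ≤ (b:ℤ)))
          = r2.toFinset.filter (fun x => a < x ∧ x ≤ b) := by
        apply Finset.filter_congr
        intro x _
        norm_cast
      rw [this, hcdef]
    have hle := Finset.card_le_card hsub
    rw [hcard] at hle
    omega
  · intro hP y x hx
    rw [window_ncard]
    rcases Finset.eq_empty_or_nonempty
      ((r2.toFinset.image (Nat.cast : ℕ → ℤ)).filter (fun z => y ≤ z ∧ z ≤ y + 2*(x:ℤ)))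
      with he | hne
    · rw [he]; simp
    set W := (r2.toFinset.image (Nat.cast : ℕ → ℤ)).filter (fun z => y ≤ z ∧ z ≤ y + 2*(x:ℤ))
      with hW
    have hminmem : W.min' hne ∈ (r2.toFinset.image (Nat.cast : ℕ → ℤ)).filter
        (fun z => y ≤ z ∧ z ≤ y + 2*(x:ℤ)) := Finset.min'_mem W hne
    have hmaxmem : W.max' hne ∈ (r2.toFinset.image (Nat.cast : ℕ → ℤ)).filter
        (fun z => y ≤ z ∧ z ≤ y + 2*(x:ℤ)) := Finset.max'_mem W hne
    obtain ⟨a, haF, hacast⟩ : ∃ a, a ∈ r2 ∧ (a : ℤ) = W.min' hne := by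
      obtain ⟨a, ha, hc⟩ := Finset.mem_image.mp (Finset.mem_filter.mp hminmem).1
      exact ⟨a, List.mem_toFinset.mp ha, hc⟩
    obtain ⟨b, hbF, hbcast⟩ : ∃ b, b ∈ r2 ∧ (b : ℤ) = W.max' hne := by
      obtain ⟨b, hb, hc⟩ := Finset.mem_image.mp (Finset.mem_filter.mp hmaxmem).1
      exact ⟨b, List.mem_toFinset.mp hb, hc⟩
    have hab : a ≤ b := by
      have h := Finset.min'_le W _ (Finset.max'_mem W hne)
      rw [← hacast, ← hbcast] at h
      exact_mod_cast h
    have hsub : W ⊆ insert ((a:ℤ)) ((r2.toFinset.image (Nat.cast : ℕ → ℤ)).filter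
        (fun z => (a:ℤ) < z ∧ z ≤ (b:ℤ))) := by
      intro z hz
      have h1 := Finset.min'_le W z hz
      have h2 := Finset.le_max' W z hz
      rw [← hacast] at h1
      rw [← hbcast] at h2
      have hzmem : z ∈ (r2.toFinset.image (Nat.cast : ℕ → ℤ)).filter
          (fun z => y ≤ z ∧ z ≤ y + 2*(x:ℤ)) := hz
      rcases eq_or_lt_of_le h1 with h | h
      · exact Finset.mem_insert.mpr (Or.inl h.symm)
      · exact Finset.mem_insert.mpr (Or.inr (Finset.mem_filter.mpr
          ⟨(Finset.mem_filter.mp hzmem).1, h, h2⟩))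
    have hbounds : (a:ℤ) ≥ y ∧ (b:ℤ) ≤ y + 2*(x:ℤ) := by
      constructor
      · rw [hacast]
        exact (Finset.mem_filter.mp hminmem).2.1
      · rw [hbcast]
        exact (Finset.mem_filter.mp hmaxmem).2.2
    have hpair := hP a haF b hbF hab
    have hcc : ((r2.toFinset.image (Nat.cast : ℕ → ℤ)).filter
        (fun z => (a:ℤ) < z ∧ z ≤ (b:ℤ))).card
        = (r2.toFinset.filter (fun t => a < t ∧ t ≤ b)).card := by
      rw [card_filter_image_cast]
      congr 1
      apply Finset.filter_congr
      intro t _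
      norm_cast
    have hle := Finset.card_le_card hsub
    have hci : (insert ((a:ℤ)) ((r2.toFinset.image (Nat.cast : ℕ → ℤ)).filter
        (fun z => (a:ℤ) < z ∧ z ≤ (b:ℤ)))).card
        ≤ ((r2.toFinset.image (Nat.cast : ℕ → ℤ)).filter
        (fun z => (a:ℤ) < z ∧ z ≤ (b:ℤ))).card + 1 := Finset.card_insert_le _ _
    rw [hcc] at hci
    omega
/-- filter card on insert-1 set equals on r2 part when a ≥ 2 -/
lemma Mcond_iff (r2 : List ℕ) (hnd : r2.Nodup) (h2 : ∀ x ∈ r2, 2 ≤ x) :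
    Mcond (insert 1 r2.toFinset) ↔
      (∀ b ∈ r2, 2 * (r2.filter (· ≤ b)).length ≤ b) ∧
      (∀ a ∈ r2, ∀ b ∈ r2, a ≤ b →
        2 * (r2.toFinset.filter (fun x => a < x ∧ x ≤ b)).card ≤ b - a + 1) := by
  have hfilter1 : ∀ b, (insert 1 r2.toFinset).filter (fun x => 1 < x ∧ x ≤ b)
      = r2.toFinset.filter (fun x => x ≤ b) := by
    intro b
    ext x
    simp only [Finset.mem_filter, Finset.mem_insert, List.mem_toFinset]
    constructor
    · rintro ⟨rfl | hx, hx1, hxb⟩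
      · omega
      · exact ⟨hx, hxb⟩
    · rintro ⟨hx, hxb⟩
      exact ⟨Or.inr hx, by have := h2 x hx; omega, hxb⟩
  have hfilter2 : ∀ a ∈ r2, ∀ b, (insert 1 r2.toFinset).filter (fun x => a < x ∧ x ≤ b)
      = r2.toFinset.filter (fun x => a < x ∧ x ≤ b) := by
    intro a ha b
    ext x
    simp only [Finset.mem_filter, Finset.mem_insert, List.mem_toFinset]
    constructor
    · rintro ⟨rfl | hx, hx1, hxb⟩
      · have := h2 a ha; omega
      · exact ⟨hx, hx1, hxb⟩
    · rintro ⟨hx, hx1, hxb⟩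
      exact ⟨Or.inr hx, hx1, hxb⟩
  have hlencard : ∀ b, (r2.toFinset.filter (fun x => x ≤ b)).card
      = (r2.filter (· ≤ b)).length := by
    intro b
    have he : r2.toFinset.filter (fun x => x ≤ b) = (r2.filter (· ≤ b)).toFinset := by
      rw [List.toFinset_filter]
      apply Finset.filter_congr
      intro x _
      simp
    rw [he, List.toFinset_card_of_nodup (hnd.filter _)]
  constructor
  · intro hM
    constructor
    · intro b hb
      have := hM 1 (Finset.mem_insert_self 1 _) b
        (Finset.mem_insert.mpr (Or.inr (List.mem_toFinset.mpr hb)))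
        (by have := h2 b hb; omega)
      rw [hfilter1, hlencard] at this
      omega
    · intro a ha b hb hab
      have := hM a (Finset.mem_insert.mpr (Or.inr (List.mem_toFinset.mpr ha)))
        b (Finset.mem_insert.mpr (Or.inr (List.mem_toFinset.mpr hb))) hab
      rw [hfilter2 a ha] at this
      exact this
  · rintro ⟨hcol, hpair⟩ a haS b hbS hab
    rcases Finset.mem_insert.mp haS with rfl | ha
    · rcases Finset.mem_insert.mp hbS with rfl | hb
      · have : (insert 1 r2.toFinset).filter (fun x => 1 < x ∧ x ≤ 1) = ∅ := by
          rw [Finset.filter_eq_empty_iff]; intro x _; omega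
        rw [this]; simp
      · have hb' := List.mem_toFinset.mp hb
        rw [hfilter1, hlencard]
        have := hcol b hb'
        omega
    · rcases Finset.mem_insert.mp hbS with rfl | hb
      · have := h2 a (List.mem_toFinset.mp ha); omega
      · rw [hfilter2 a (List.mem_toFinset.mp ha)]
        exact hpair a (List.mem_toFinset.mp ha) b (List.mem_toFinset.mp hb) hab

/-- column condition via getD vs via counts -/
lemma col_iff (r2 : List ℕ) (hs : r2.Pairwise (· < ·)) :
    (∀ i < r2.length, 2 * (i+1) ≤ r2.getD i 0) ↔
      (∀ b ∈ r2, 2 * (r2.filter (· ≤ b)).length ≤ b) := by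
  constructor
  · intro h b hb
    obtain ⟨i, hi, rfl⟩ := List.mem_iff_getElem.mp hb
    have hgd : r2.getD i 0 = r2[i] := List.getD_eq_getElem r2 0 hi
    rw [← hgd]
    rw [show (r2.filter (· ≤ r2.getD i 0)).length = i + 1 from cnt_at hs hi]
    exact h i hi
  · intro h i hi
    have hmem : r2.getD i 0 ∈ r2 := by
      rw [List.getD_eq_getElem r2 0 hi]; exact List.getElem_mem hi
    have := h _ hmem
    rw [cnt_at hs hi] at this
    exact this

/-- range' filter count -/
lemma range'_filter_count (n v : ℕ) :
    (((List.range' 1 n).filter (· ≤ v))).length = min v n := by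
  have : (List.range' 1 n).filter (· ≤ v) = List.range' 1 (min v n) := by
    apply sorted_eq_of_mem_iff
    · exact List.Pairwise.filter _ (List.pairwise_lt_range' (s := 1) (n := n))
    · exact List.pairwise_lt_range' (s := 1) (n := min v n)
    · intro x
      rw [List.mem_filter, List.mem_range'_1, List.mem_range'_1]
      simp only [decide_eq_true_eq]
      omega
  rw [this, List.length_range']

/-- interleaving pointwise iff -/
lemma interleave_iff {n : ℕ} {r1 r2 : List ℕ} (h1 : r1.Pairwise (· < ·)) (h2 : r2.Pairwise (· < ·))
    (hperm : (r1 ++ r2).Perm (List.range' 1 n)) {i : ℕ} (hi : i < r2.length)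
    (hir1 : i < r1.length) :
    (r1.getD i 0 < r2.getD i 0 ↔ 2 * (i+1) ≤ r2.getD i 0) := by
  have hmem : r2.getD i 0 ∈ r2 := by
    rw [List.getD_eq_getElem r2 0 hi]; exact List.getElem_mem hi
  have hrange : 1 ≤ r2.getD i 0 ∧ r2.getD i 0 ≤ n := by
    have : r2.getD i 0 ∈ List.range' 1 n := hperm.mem_iff.mp (by
      rw [List.mem_append]; exact Or.inr hmem)
    rw [List.mem_range'_1] at this
    omega
  set b := r2.getD i 0 with hb
  have hsum : (r1.filter (· ≤ b - 1)).length + (r2.filter (· ≤ b - 1)).length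
      = min (b-1) n := by
    have hp := (hperm.filter (fun x => decide (x ≤ b - 1))).length_eq
    rw [List.filter_append, List.length_append] at hp
    rw [hp, range'_filter_count]
  have hc2 : (r2.filter (· ≤ b - 1)).length = i := cnt_below h2 hi (by omega)
  have hmin : min (b-1) n = b - 1 := by omega
  have hosl := osl h1 i hir1 (b - 1)
  constructor
  · intro h
    have : r1.getD i 0 ≤ b - 1 := by omega
    have := hosl.mp this
    omega
  · intro h
    have : i < (r1.filter (· ≤ b - 1)).length := by omega
    have := hosl.mpr this
    omega

/-- length condition from the column condition -/
lemma len_le {n : ℕ} {r1 r2 : List ℕ} (h2 : r2.Pairwise (· < ·))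
    (hperm : (r1 ++ r2).Perm (List.range' 1 n))
    (hcol : ∀ i < r2.length, 2 * (i+1) ≤ r2.getD i 0) : r2.length ≤ r1.length := by
  have hn : r1.length + r2.length = n := by
    have := hperm.length_eq
    rw [List.length_append, List.length_range'] at this
    exact this
  rcases Nat.eq_zero_or_pos r2.length with h0 | hpos
  · omega
  have hi : r2.length - 1 < r2.length := by omega
  have hcl := hcol _ hi
  have hmem : r2.getD (r2.length - 1) 0 ∈ r2 := by
    rw [List.getD_eq_getElem r2 0 hi]; exact List.getElem_mem hi
  have : r2.getD (r2.length - 1) 0 ∈ List.range' 1 n := hperm.mem_iff.mp (by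
    rw [List.mem_append]; exact Or.inr hmem)
  rw [List.mem_range'_1] at this
  omega



def toWord (m : ℕ) (r2 : List ℕ) : List Bool :=
  (List.range' 2 m).map (fun p => decide (p ∈ r2))
def wr2 (m : ℕ) (u : List Bool) : List ℕ :=
  (List.range' 2 m).filter (fun p => u.getD (p-2) false)
def wr1 (m : ℕ) (u : List Bool) : List ℕ :=
  1 :: (List.range' 2 m).filter (fun p => ! u.getD (p-2) false)

lemma length_toWord (m : ℕ) (r2 : List ℕ) : (toWord m r2).length = m := by
  simp [toWord]

lemma getD_toWord (m : ℕ) (r2 : List ℕ) {j : ℕ} (hj : j < m) :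
    (toWord m r2).getD j false = decide ((j + 2) ∈ r2) := by
  rw [List.getD_eq_getElem _ _ (by simpa [toWord] using hj)]
  unfold toWord
  rw [List.getElem_map, List.getElem_range']
  congr 1
  · simp [Nat.add_comm]

lemma sorted_range'_filter (m s : ℕ) (p : ℕ → Bool) :
    ((List.range' s m).filter p).Pairwise (· < ·) :=
  List.Pairwise.filter p (List.pairwise_lt_range' (s := s) (n := m))

lemma mem_wr2 (m : ℕ) (u : List Bool) (p : ℕ) :
    p ∈ wr2 m u ↔ (2 ≤ p ∧ p < 2 + m ∧ u.getD (p-2) false = true) := by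
  unfold wr2
  rw [List.mem_filter, List.mem_range'_1]
  tauto

lemma mem_wr1 (m : ℕ) (u : List Bool) (p : ℕ) :
    p ∈ wr1 m u ↔ p = 1 ∨ (2 ≤ p ∧ p < 2 + m ∧ ¬ u.getD (p-2) false = true) := by
  unfold wr1
  rw [List.mem_cons, List.mem_filter, List.mem_range'_1]
  constructor
  · rintro (rfl | ⟨hr, hb⟩)
    · exact Or.inl rfl
    · exact Or.inr ⟨hr.1, hr.2, by simp_all⟩
  · rintro (rfl | ⟨h1, h2, h3⟩)
    · exact Or.inl rfl
    · exact Or.inr ⟨⟨h1, h2⟩, by simp_all⟩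

lemma sorted_wr2 (m : ℕ) (u : List Bool) : (wr2 m u).Pairwise (· < ·) :=
  sorted_range'_filter m 2 _

lemma sorted_wr1 (m : ℕ) (u : List Bool) : (wr1 m u).Pairwise (· < ·) := by
  unfold wr1
  rw [List.pairwise_cons]
  refine ⟨fun b hb => ?_, sorted_range'_filter m 2 _⟩
  have := (List.mem_filter.mp hb).1
  rw [List.mem_range'_1] at this
  omega

lemma roundtrip_word (m : ℕ) (u : List Bool) (hlen : u.length = m) :
    toWord m (wr2 m u) = u := by
  apply List.ext_getElem (by simp [length_toWord, hlen])
  intro j h1 h2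
  have hj : j < m := by simpa [length_toWord] using h1
  have := getD_toWord m (wr2 m u) hj
  rw [List.getD_eq_getElem _ _ h1] at this
  rw [this]
  have hm : (j + 2) ∈ wr2 m u ↔ u[j] = true := by
    rw [mem_wr2]
    have : u.getD (j + 2 - 2) false = u[j] := by
      rw [show j + 2 - 2 = j from rfl, List.getD_eq_getElem _ _ (by omega)]
    rw [this]
    constructor
    · tauto
    · intro h; exact ⟨by omega, by omega, h⟩
  rcases Bool.eq_false_or_eq_true u[j] with hb | hb <;> simp [hm, hb]

/-- the perm fact for the constructed pair -/
lemma perm_w (m : ℕ) (u : List Bool) :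
    ((wr1 m u) ++ (wr2 m u)).Perm (List.range' 1 (m+1)) := by
  rw [show List.range' 1 (m+1) = 1 :: List.range' 2 m from List.range'_succ]
  unfold wr1 wr2
  rw [List.cons_append]
  refine List.Perm.cons 1 ?_
  exact List.Perm.trans List.perm_append_comm (List.filter_append_perm _ _)


lemma head_min {l : List ℕ} (hs : l.Pairwise (· < ·)) {x : ℕ} (hx : x ∈ l) : l.getD 0 0 ≤ x := by
  obtain ⟨j, hj, rfl⟩ := List.mem_iff_getElem.mp hx
  rw [List.getD_eq_getElem _ _ (by omega)]
  rcases Nat.eq_zero_or_pos j with rfl | hp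
  · exact le_rfl
  · exact (List.pairwise_iff_getElem.mp hs 0 j (by omega) hj hp).le

lemma syt_facts {m : ℕ} {r1 r2 : List ℕ} (h : IsSYT2 (m+1) r1 r2) :
    (∀ x ∈ r2, 2 ≤ x ∧ x ≤ m+1) ∧ (∀ x ∈ r1, 1 ≤ x ∧ x ≤ m+1) ∧ 1 ∈ r1 ∧ r1.Disjoint r2 := by
  obtain ⟨hs1, hs2, hlen, hcol, hperm⟩ := h
  have hmem : ∀ x, (x ∈ r1 ∨ x ∈ r2) → 1 ≤ x ∧ x ≤ m+1 := by
    intro x hx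
    have : x ∈ List.range' 1 (m+1) := hperm.mem_iff.mp (List.mem_append.mpr hx)
    rw [List.mem_range'_1] at this; omega
  have hnd : (r1 ++ r2).Nodup := hperm.symm.nodup (List.nodup_range' (s := 1) (n := m+1))
  have hdisj := List.disjoint_of_nodup_append hnd
  have hr2 : ∀ x ∈ r2, 2 ≤ x ∧ x ≤ m+1 := by
    intro x hx
    have hne : r2 ≠ [] := List.ne_nil_of_mem hx
    have hpos : 0 < r2.length := List.length_pos_iff.mpr hne
    have hr1pos : 0 < r1.length := by omega
    have hd0 : 1 ≤ r1.getD 0 0 := by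
      have : r1.getD 0 0 ∈ r1 := by
        rw [List.getD_eq_getElem _ _ hr1pos]; exact List.getElem_mem _
      exact (hmem _ (Or.inl this)).1
    have hc := hcol 0 hpos
    have := head_min hs2 hx
    exact ⟨by omega, (hmem x (Or.inr hx)).2⟩
  refine ⟨hr2, fun x hx => hmem x (Or.inl hx), ?_, hdisj⟩
  have h1r : (1 : ℕ) ∈ List.range' 1 (m+1) := by rw [List.mem_range'_1]; omega
  have hm := hperm.mem_iff.mpr h1r
  rcases List.mem_append.mp hm with h | h
  · exact h
  · exact absurd (hr2 1 h).1 (by omega)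

lemma roundtrip_pair {m : ℕ} {r1 r2 : List ℕ} (h : IsSYT2 (m+1) r1 r2) :
    wr1 m (toWord m r2) = r1 ∧ wr2 m (toWord m r2) = r2 := by
  obtain ⟨hr2b, hr1b, h1r1, hdisj⟩ := syt_facts h
  obtain ⟨hs1, hs2, hlen, hcol, hperm⟩ := h
  have hbit : ∀ p, 2 ≤ p → p < 2 + m → ((toWord m r2).getD (p-2) false = true ↔ p ∈ r2) := by
    intro p h2 hm
    rw [getD_toWord m r2 (by omega : p - 2 < m)]
    rw [show p - 2 + 2 = p by omega]
    simp
  constructor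
  · apply sorted_eq_of_mem_iff (sorted_wr1 m _) hs1
    intro x
    rw [mem_wr1]
    constructor
    · rintro (rfl | ⟨h2, hm, hb⟩)
      · exact h1r1
      · have hx : x ∈ List.range' 1 (m+1) := by rw [List.mem_range'_1]; omega
        rcases List.mem_append.mp (hperm.mem_iff.mpr hx) with h | h
        · exact h
        · exact absurd ((hbit x h2 hm).mpr h) hb
    · intro hx
      rcases Nat.lt_or_ge x 2 with h2 | h2
      · have := (hr1b x hx).1; left; omega
      · right
        refine ⟨h2, by have := (hr1b x hx).2; omega, ?_⟩
        rw [hbit x h2 (by have := (hr1b x hx).2; omega)]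
        exact fun hc => hdisj hx hc
  · apply sorted_eq_of_mem_iff (sorted_wr2 m _) hs2
    intro x
    rw [mem_wr2]
    constructor
    · rintro ⟨h2, hm, hb⟩
      exact (hbit x h2 hm).mp hb
    · intro hx
      have h2 := (hr2b x hx).1
      have hm : x < 2 + m := by have := (hr2b x hx).2; omega
      exact ⟨h2, hm, (hbit x h2 hm).mpr hx⟩

lemma forward {m : ℕ} {r1 r2 : List ℕ} (h : IsSYT2 (m+1) r1 r2)
    (hU : Uncrowded (entrySet r2)) : runA 0 (toWord m r2) = true := by
  obtain ⟨hr2b, hr1b, h1r1, hdisj⟩ := syt_facts h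
  obtain ⟨hs1, hs2, hlen, hcol, hperm⟩ := h
  have hnd2 : r2.Nodup := hs2.imp ne_of_lt
  have hSb : ∀ x ∈ insert 1 r2.toFinset, 1 ≤ x ∧ x ≤ m+1 := by
    intro x hx
    rcases Finset.mem_insert.mp hx with rfl | hx
    · omega
    · have := hr2b x (List.mem_toFinset.mp hx); omega
  apply (runA_iff_Mcond (insert 1 r2.toFinset) (m+1) (Finset.mem_insert_self 1 _) hSb
    (toWord m r2) (by rw [length_toWord]; omega) ?hchar).mpr ?hM
  case hchar =>
    intro j hj
    rw [getD_toWord m r2 (by rwa [length_toWord] at hj)]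
    simp only [decide_eq_true_eq]
    rw [Finset.mem_insert, List.mem_toFinset]
    constructor
    · exact fun h => Or.inr h
    · rintro (h | h)
      · omega
      · exact h
  case hM =>
    rw [Mcond_iff r2 hnd2 (fun x hx => (hr2b x hx).1)]
    constructor
    · rw [← col_iff r2 hs2]
      intro i hi
      exact (interleave_iff hs1 hs2 hperm hi (by omega)).mp (hcol i hi)
    · exact (uncrowded_iff r2).mp hU

lemma backward {m : ℕ} {u : List Bool} (hlen : u.length = m) (hacc : runA 0 u = true) :
    IsSYT2 (m+1) (wr1 m u) (wr2 m u) ∧ Uncrowded (entrySet (wr2 m u)) := by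
  have hs2 := sorted_wr2 m u
  have hs1 := sorted_wr1 m u
  have hnd2 : (wr2 m u).Nodup := hs2.imp ne_of_lt
  have hperm := perm_w m u
  have hr2b : ∀ x ∈ wr2 m u, 2 ≤ x ∧ x ≤ m+1 := by
    intro x hx; rw [mem_wr2] at hx; omega
  have hSb : ∀ x ∈ insert 1 (wr2 m u).toFinset, 1 ≤ x ∧ x ≤ m+1 := by
    intro x hx
    rcases Finset.mem_insert.mp hx with rfl | hx
    · omega
    · have := hr2b x (List.mem_toFinset.mp hx); omega
  have hM : Mcond (insert 1 (wr2 m u).toFinset) := by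
    refine (runA_iff_Mcond _ (m+1) (Finset.mem_insert_self 1 _) hSb u (by omega) ?_).mp hacc
    intro j hj
    rw [Finset.mem_insert, List.mem_toFinset, mem_wr2]
    rw [show j + 2 - 2 = j from rfl]
    constructor
    · intro h; exact Or.inr ⟨by omega, by omega, h⟩
    · rintro (h | h)
      · omega
      · exact h.2.2
  rw [Mcond_iff _ hnd2 (fun x hx => (hr2b x hx).1)] at hM
  have hcol : ∀ i < (wr2 m u).length, 2 * (i+1) ≤ (wr2 m u).getD i 0 :=
    (col_iff _ hs2).mpr hM.1
  have hlen2 := len_le hs2 hperm hcol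
  have hgetd : ∀ i < (wr2 m u).length, (wr1 m u).getD i 0 < (wr2 m u).getD i 0 := by
    intro i hi
    exact (interleave_iff hs1 hs2 hperm hi (by omega)).mpr (hcol i hi)
  exact ⟨⟨hs1, hs2, hlen2, hgetd, hperm⟩, (uncrowded_iff _).mpr hM.2⟩

lemma card_eq_cnt (P : List Bool → Bool) (m : ℕ) :
    Nat.card {l : List Bool // l.length = m ∧ P l = true} = cnt P m := by
  have e : {l : List Bool // l.length = m ∧ P l = true}
      ≃ {l // l ∈ (words m).filter (fun l => P l = true)} :=
    Equiv.subtypeEquivRight (fun l => by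
      rw [Finset.mem_filter, mem_words])
  rw [Nat.card_congr e, Nat.card_eq_fintype_card, Fintype.card_coe]
  rfl

lemma main_equiv (m : ℕ) :
    Nat.card {p : List ℕ × List ℕ // IsSYT2 (m+1) p.1 p.2 ∧ Uncrowded (entrySet p.2)}
      = Nat.card {l : List Bool // l.length = m ∧ runA 0 l = true} := by
  apply Nat.card_congr
  refine ⟨fun x => ⟨toWord m x.1.2, length_toWord m _, forward x.2.1 x.2.2⟩,
    fun y => ⟨(wr1 m y.1, wr2 m y.1), (backward y.2.1 y.2.2).1, (backward y.2.1 y.2.2).2⟩,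
    ?_, ?_⟩
  · rintro ⟨⟨r1, r2⟩, hp⟩
    have := roundtrip_pair hp.1
    simp only [Subtype.mk.injEq, Prod.mk.injEq]
    exact ⟨this.1, this.2⟩
  · rintro ⟨u, hu⟩
    simp only [Subtype.mk.injEq]
    exact roundtrip_word m u hu.1

end Stmt17Aux

theorem stmt17 (n : ℕ) :
    Nat.card {p : List ℕ × List ℕ // IsSYT2 n p.1 p.2 ∧ Uncrowded (entrySet p.2)} =
      Nat.card {l : List Bool // l.length = n - 1 ∧ OddBlocks l} := by
  rcases n with _ | m
  · -- n = 0
    apply Nat.card_congr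
    have hsyt0 : IsSYT2 0 ([] : List ℕ) ([] : List ℕ) :=
      ⟨List.Pairwise.nil, List.Pairwise.nil, le_rfl, fun i hi => absurd hi (by simp),
        by simp [List.range']⟩
    have hunc0 : Uncrowded (entrySet ([] : List ℕ)) := by
      intro y x hx
      have he : entrySet ([] : List ℕ) = ∅ := by ext z; simp [entrySet]
      rw [he, Set.inter_empty, Set.ncard_empty]
      omega
    have hOB : OddBlocks ([] : List Bool) := Stmt17Aux.oddBlocks_nil
    refine ⟨fun _ => ⟨[], rfl, hOB⟩, fun _ => ⟨(([], []) : List ℕ × List ℕ), hsyt0, hunc0⟩,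
      ?_, ?_⟩
    · rintro ⟨⟨r1, r2⟩, hp, _⟩
      have hperm := hp.2.2.2.2
      have hnil : r1 ++ r2 = [] := List.Perm.eq_nil (by simpa [List.range'] using hperm)
      obtain ⟨h1, h2⟩ := List.append_eq_nil_iff.mp hnil
      subst h1; subst h2
      rfl
    · rintro ⟨u, hu, _⟩
      have : u = [] := List.length_eq_zero_iff.mp hu
      subst this
      rfl
  · -- n = m+1
    rw [show m + 1 - 1 = m from rfl]
    rw [Stmt17Aux.main_equiv m, Stmt17Aux.card_eq_cnt, Stmt17Aux.count_eq m,
      show Stmt17Aux.gS m = Stmt17Aux.cnt Stmt17Aux.obF m from rfl,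
      ← Stmt17Aux.card_eq_cnt Stmt17Aux.obF m]
    apply Nat.card_congr
    exact Equiv.subtypeEquivRight (fun l =>
      and_congr_right (fun _ => (Stmt17Aux.oddBlocks_iff_obF l).symm))
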